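/- arXiv:math/0403316 — 2 statements merged into one kernel-verified Lean document; each statement's English description precedes it below -/
import Mathlib

section
/- The formal power series h(t) = ∑_{n≥0} (−1)^{n+1} c_n t^{3n+1}, where c_n is the n-th Catalan number, is its own inverse under composition: h(h(t)) = t. -/
open PowerSeries

/-- Composition `f(g)` of formal power series (intended for `g` with zero constant term). -/
noncomputable def pcomp (f g : PowerSeries ℚ) : PowerSeries ℚ :=
  PowerSeries.mk fun n =>
    ∑ k ∈ Finset.range (n + 1), (PowerSeries.coeff k f) * (PowerSeries.coeff n (g ^ k))

/-- `h(t) = ∑_{n≥0} (−1)^{n+1} c_n t^{3n+1}` where `c_n` is the `n`-th Catalan number: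
the coefficient of `t^m` is `(−1)^{n+1} c_n` if `m = 3n+1` and `0` otherwise. -/
noncomputable def hCat : PowerSeries ℚ :=
  PowerSeries.mk fun m =>
    if m % 3 = 1 then (-1 : ℚ) ^ (m / 3 + 1) * (catalan (m / 3) : ℚ) else 0

namespace HCatAux

open Finset

lemma catalan_ne_zero (n : ℕ) : catalan n ≠ 0 := by
  induction n using Nat.strong_induction_on with
  | _ n ih =>
    cases n with
    | zero => simp
    | succ m =>
      rw [catalan_succ']
      intro h
      rw [Finset.sum_eq_zero_iff] at h
      have := h (0, m) (by simp)
      simp at this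
      exact ih m (by omega) this

lemma coeff_hCat (m : ℕ) : PowerSeries.coeff m hCat =
    if m % 3 = 1 then (-1 : ℚ) ^ (m / 3 + 1) * (catalan (m / 3) : ℚ) else 0 := by
  simp [hCat]

lemma constantCoeff_hCat : PowerSeries.constantCoeff hCat = 0 := by
  rw [← PowerSeries.coeff_zero_eq_constantCoeff, coeff_hCat]
  norm_num

lemma mod_of_ne_zero {m : ℕ} (h : PowerSeries.coeff m hCat ≠ 0) : m % 3 = 1 := by
  by_contra h'
  rw [coeff_hCat, if_neg h'] at h
  exact h rfl

lemma coeff_hCat_arith (x : ℕ) :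
    PowerSeries.coeff (3 * x + 1) hCat = (-1 : ℚ) ^ (x + 1) * (catalan x : ℚ) := by
  have h1 : (3 * x + 1) % 3 = 1 := by omega
  have h2 : (3 * x + 1) / 3 = x := by omega
  rw [coeff_hCat, if_pos h1, h2]

lemma coeff_hCat_arith_ne_zero (x : ℕ) : PowerSeries.coeff (3 * x + 1) hCat ≠ 0 := by
  rw [coeff_hCat_arith]
  exact mul_ne_zero (pow_ne_zero _ (by norm_num)) (by exact_mod_cast catalan_ne_zero x)

lemma coeff_pow_eq_zero {g : PowerSeries ℚ} (hg : PowerSeries.constantCoeff g = 0)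
    {k n : ℕ} (h : n < k) : PowerSeries.coeff n (g ^ k) = 0 := by
  induction k generalizing n with
  | zero => omega
  | succ k ih =>
    rw [pow_succ, PowerSeries.coeff_mul]
    apply Finset.sum_eq_zero
    rintro ⟨i, j⟩ hij
    rw [Finset.HasAntidiagonal.mem_antidiagonal] at hij
    by_cases hj : j = 0
    · subst hj
      rw [PowerSeries.coeff_zero_eq_constantCoeff, hg, mul_zero]
    · rw [ih (by omega), zero_mul]

/-- coefficient of `hCat ^ 2` -/
lemma coeff_hCat_sq (k : ℕ) : PowerSeries.coeff k (hCat ^ 2) =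
    if k % 3 = 2 then (-1 : ℚ) ^ (k / 3) * (catalan (k / 3 + 1) : ℚ) else 0 := by
  rw [pow_two, PowerSeries.coeff_mul]
  by_cases hk : k % 3 = 2
  · rw [if_pos hk]
    set a := k / 3 with ha
    have hk3 : k = 3 * a + 2 := by omega
    have step : (∑ p ∈ antidiagonal k,
        PowerSeries.coeff p.1 hCat * PowerSeries.coeff p.2 hCat)
        = ∑ q ∈ antidiagonal a,
          PowerSeries.coeff (3 * q.1 + 1) hCat * PowerSeries.coeff (3 * q.2 + 1) hCat := by
      apply Finset.sum_bij_ne_zero (fun p _ _ => ((p.1 - 1) / 3, (p.2 - 1) / 3))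
      · rintro ⟨i, j⟩ h₁ h₂
        rw [Finset.HasAntidiagonal.mem_antidiagonal] at h₁
        have hi : i % 3 = 1 := mod_of_ne_zero fun h => h₂ (by rw [h, zero_mul])
        have hj : j % 3 = 1 := mod_of_ne_zero fun h => h₂ (by rw [h, mul_zero])
        rw [Finset.HasAntidiagonal.mem_antidiagonal]
        omega
      · rintro ⟨i, j⟩ h₁₁ h₁₂ ⟨i', j'⟩ h₂₁ h₂₂ heq
        rw [Finset.HasAntidiagonal.mem_antidiagonal] at h₁₁ h₂₁
        have hi : i % 3 = 1 := mod_of_ne_zero fun h => h₁₂ (by rw [h, zero_mul])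
        have hj : j % 3 = 1 := mod_of_ne_zero fun h => h₁₂ (by rw [h, mul_zero])
        have hi' : i' % 3 = 1 := mod_of_ne_zero fun h => h₂₂ (by rw [h, zero_mul])
        have hj' : j' % 3 = 1 := mod_of_ne_zero fun h => h₂₂ (by rw [h, mul_zero])
        simp only [Prod.mk.injEq] at heq
        obtain ⟨e1, e2⟩ := heq
        rw [Prod.mk.injEq]
        exact ⟨by omega, by omega⟩
      · rintro ⟨x, y⟩ hxy hne
        rw [Finset.HasAntidiagonal.mem_antidiagonal] at hxy
        refine ⟨(3 * x + 1, 3 * y + 1), ?_, ?_, ?_⟩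
        · rw [Finset.HasAntidiagonal.mem_antidiagonal]; omega
        · exact mul_ne_zero (coeff_hCat_arith_ne_zero x) (coeff_hCat_arith_ne_zero y)
        · simp only [Prod.mk.injEq]
          constructor <;> omega
      · rintro ⟨i, j⟩ h₁ h₂
        have hi : i % 3 = 1 := mod_of_ne_zero fun h => h₂ (by rw [h, zero_mul])
        have hj : j % 3 = 1 := mod_of_ne_zero fun h => h₂ (by rw [h, mul_zero])
        have e1 : 3 * ((i - 1) / 3) + 1 = i := by omega
        have e2 : 3 * ((j - 1) / 3) + 1 = j := by omega
        rw [e1, e2]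
    rw [step]
    have step2 : ∀ q ∈ antidiagonal a,
        PowerSeries.coeff (3 * q.1 + 1) hCat * PowerSeries.coeff (3 * q.2 + 1) hCat
        = (-1 : ℚ) ^ a * ((catalan q.1 : ℚ) * (catalan q.2 : ℚ)) := by
      rintro ⟨x, y⟩ hxy
      rw [Finset.HasAntidiagonal.mem_antidiagonal] at hxy
      rw [coeff_hCat_arith, coeff_hCat_arith]
      have : (-1 : ℚ) ^ (x + 1) * (-1 : ℚ) ^ (y + 1) = (-1 : ℚ) ^ a := by
        rw [← pow_add]
        have : x + 1 + (y + 1) = a + 2 := by omega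
        rw [this, pow_add]
        norm_num
      calc (-1 : ℚ) ^ (x + 1) * (catalan x : ℚ) * ((-1 : ℚ) ^ (y + 1) * (catalan y : ℚ))
          = ((-1 : ℚ) ^ (x + 1) * (-1 : ℚ) ^ (y + 1)) * ((catalan x : ℚ) * (catalan y : ℚ)) := by
            ring
        _ = (-1 : ℚ) ^ a * ((catalan x : ℚ) * (catalan y : ℚ)) := by rw [this]
    rw [Finset.sum_congr rfl step2, ← Finset.mul_sum]
    congr 1
    rw [catalan_succ']
    push_cast
    rfl
  · rw [if_neg hk]
    apply Finset.sum_eq_zero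
    rintro ⟨i, j⟩ hij
    rw [Finset.HasAntidiagonal.mem_antidiagonal] at hij
    by_cases h1 : PowerSeries.coeff i hCat = 0
    · rw [h1, zero_mul]
    by_cases h2 : PowerSeries.coeff j hCat = 0
    · rw [h2, mul_zero]
    have := mod_of_ne_zero h1
    have := mod_of_ne_zero h2
    omega

/-- The functional equation of `hCat`. -/
lemma hCat_eq : hCat = -X + X ^ 2 * hCat ^ 2 := by
  ext m
  rw [map_add, map_neg, PowerSeries.coeff_X, PowerSeries.coeff_X_pow_mul', coeff_hCat,
    coeff_hCat_sq]
  rcases (by omega : m = 0 ∨ m = 1 ∨ 2 ≤ m) with rfl | rfl | hm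
  · norm_num
  · norm_num
  · rw [if_neg (by omega : ¬ m = 1), if_pos hm]
    by_cases h : m % 3 = 1
    · rw [if_pos h, if_pos (by omega : (m - 2) % 3 = 2)]
      have e1 : (m - 2) / 3 + 1 = m / 3 := by omega
      have e2 : m / 3 + 1 = (m - 2) / 3 + 2 := by omega
      rw [e1, e2, pow_add]
      norm_num
    · rw [if_neg h, if_neg (by omega : ¬ (m - 2) % 3 = 2)]
      norm_num

lemma coeff_pcomp (f g : PowerSeries ℚ) (n : ℕ) :
    PowerSeries.coeff n (pcomp f g)
      = ∑ k ∈ Finset.range (n + 1),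
          PowerSeries.coeff k f * PowerSeries.coeff n (g ^ k) := by
  simp [pcomp]

lemma coeff_pcomp_eq (f g : PowerSeries ℚ) (hg : PowerSeries.constantCoeff g = 0)
    {n N : ℕ} (hN : n < N) :
    PowerSeries.coeff n (pcomp f g)
      = ∑ k ∈ Finset.range N,
          PowerSeries.coeff k f * PowerSeries.coeff n (g ^ k) := by
  rw [coeff_pcomp]
  apply Finset.sum_subset (Finset.range_subset_range.2 hN)
  intro k _ hk
  rw [Finset.mem_range, not_lt] at hk
  rw [coeff_pow_eq_zero hg (by omega), mul_zero]

lemma pcomp_add (f₁ f₂ g : PowerSeries ℚ) :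
    pcomp (f₁ + f₂) g = pcomp f₁ g + pcomp f₂ g := by
  ext n
  simp [coeff_pcomp, add_mul, Finset.sum_add_distrib]

lemma pcomp_neg (f g : PowerSeries ℚ) : pcomp (-f) g = -pcomp f g := by
  ext n
  simp [coeff_pcomp, Finset.sum_neg_distrib]

lemma pcomp_X (g : PowerSeries ℚ) (hg : PowerSeries.constantCoeff g = 0) :
    pcomp X g = g := by
  ext n
  rw [coeff_pcomp]
  cases n with
  | zero =>
    simp [PowerSeries.coeff_zero_eq_constantCoeff, hg]
  | succ n =>
    rw [Finset.sum_eq_single 1]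
    · rw [PowerSeries.coeff_X, if_pos rfl, one_mul, pow_one]
    · intro k _ hk
      rw [PowerSeries.coeff_X, if_neg hk, zero_mul]
    · intro h
      exact absurd (Finset.mem_range.2 (by omega)) h

lemma pcomp_mul (f₁ f₂ g : PowerSeries ℚ) (hg : PowerSeries.constantCoeff g = 0) :
    pcomp (f₁ * f₂) g = pcomp f₁ g * pcomp f₂ g := by
  ext n
  set N := n + 1 with hN
  set S : PowerSeries ℚ → PowerSeries ℚ := fun f =>
    ∑ k ∈ Finset.range N, PowerSeries.C (PowerSeries.coeff k f) * g ^ k with hS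
  have coeffS : ∀ (f : PowerSeries ℚ) (m : ℕ), PowerSeries.coeff m (S f)
      = ∑ k ∈ Finset.range N, PowerSeries.coeff k f * PowerSeries.coeff m (g ^ k) := by
    intro f m
    rw [hS]
    simp [PowerSeries.coeff_C_mul]
  have hpc : ∀ (f : PowerSeries ℚ) (m : ℕ), m ≤ n →
      PowerSeries.coeff m (pcomp f g) = PowerSeries.coeff m (S f) := by
    intro f m hm
    rw [coeff_pcomp_eq f g hg (N := N) (by omega), coeffS]
  have hprod : PowerSeries.coeff n (pcomp f₁ g * pcomp f₂ g)
      = PowerSeries.coeff n (S f₁ * S f₂) := by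
    rw [PowerSeries.coeff_mul, PowerSeries.coeff_mul]
    apply Finset.sum_congr rfl
    rintro ⟨p, q⟩ hpq
    rw [Finset.HasAntidiagonal.mem_antidiagonal] at hpq
    rw [hpc f₁ p (by omega), hpc f₂ q (by omega)]
  rw [hprod, hpc (f₁ * f₂) n le_rfl, coeffS]
  -- expand the RHS product
  have hSS : S f₁ * S f₂ = ∑ p ∈ Finset.range N ×ˢ Finset.range N,
      PowerSeries.C (PowerSeries.coeff p.1 f₁ * PowerSeries.coeff p.2 f₂)
        * g ^ (p.1 + p.2) := by
    rw [hS, Finset.sum_mul_sum, ← Finset.sum_product']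
    apply Finset.sum_congr rfl
    rintro ⟨i, j⟩ _
    rw [map_mul, pow_add]
    ring
  rw [hSS, map_sum]
  have hterm : ∀ p : ℕ × ℕ, PowerSeries.coeff n
      (PowerSeries.C (PowerSeries.coeff p.1 f₁ * PowerSeries.coeff p.2 f₂)
        * g ^ (p.1 + p.2))
      = PowerSeries.coeff p.1 f₁ * PowerSeries.coeff p.2 f₂
          * PowerSeries.coeff n (g ^ (p.1 + p.2)) := fun p => PowerSeries.coeff_C_mul _ _ _
  rw [Finset.sum_congr rfl fun p _ => hterm p]
  -- restrict RHS to pairs with p.1 + p.2 ≤ n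
  rw [← Finset.sum_filter_of_ne (p := fun p : ℕ × ℕ => p.1 + p.2 ≤ n)
    (fun p _ hp => by
      by_contra hc
      exact hp (by rw [coeff_pow_eq_zero hg (by omega), mul_zero]))]
  -- expand LHS convolution
  have hconv : ∀ k, PowerSeries.coeff k (f₁ * f₂) * PowerSeries.coeff n (g ^ k)
      = ∑ p ∈ Finset.HasAntidiagonal.antidiagonal k,
          PowerSeries.coeff p.1 f₁ * PowerSeries.coeff p.2 f₂
            * PowerSeries.coeff n (g ^ k) := by
    intro k
    rw [PowerSeries.coeff_mul, Finset.sum_mul]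
  rw [Finset.sum_congr rfl fun k _ => hconv k, Finset.sum_sigma']
  apply Finset.sum_nbij' (fun σ => σ.2) (fun p => ⟨p.1 + p.2, p⟩)
  · rintro ⟨k, i, j⟩ hσ
    simp only [Finset.mem_sigma, Finset.HasAntidiagonal.mem_antidiagonal, Finset.mem_range] at hσ
    simp only [Finset.mem_filter, Finset.mem_product, Finset.mem_range]
    obtain ⟨hk, hij⟩ := hσ
    exact ⟨⟨by omega, by omega⟩, by omega⟩
  · rintro ⟨i, j⟩ hp
    simp only [Finset.mem_filter, Finset.mem_product, Finset.mem_range] at hp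
    simp only [Finset.mem_sigma, Finset.HasAntidiagonal.mem_antidiagonal, Finset.mem_range]
    exact ⟨by omega, trivial⟩
  · rintro ⟨k, i, j⟩ hσ
    simp only [Finset.mem_sigma, Finset.HasAntidiagonal.mem_antidiagonal] at hσ
    obtain ⟨-, h2⟩ := hσ
    subst h2
    rfl
  · rintro ⟨i, j⟩ _
    rfl
  · rintro ⟨k, i, j⟩ hσ
    simp only [Finset.mem_sigma, Finset.HasAntidiagonal.mem_antidiagonal] at hσ
    obtain ⟨-, h2⟩ := hσ
    subst h2
    rfl

end HCatAux

/-- `h` is its own compositional inverse: `h(h(t)) = t`. -/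
theorem hCat_comp_self : pcomp hCat hCat = X := by
  have hg := HCatAux.constantCoeff_hCat
  set w := pcomp hCat hCat with hw
  have hXeq : pcomp X hCat = hCat := HCatAux.pcomp_X hCat hg
  have key' : hCat = -X + X * X * (hCat * hCat) := by
    linear_combination HCatAux.hCat_eq
  have e1 : w = -hCat + hCat ^ 2 * w ^ 2 := by
    calc w = pcomp hCat hCat := hw
      _ = pcomp (-X + X * X * (hCat * hCat)) hCat := by rw [← key']
      _ = -hCat + hCat ^ 2 * w ^ 2 := by
          rw [HCatAux.pcomp_add, HCatAux.pcomp_neg,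
            HCatAux.pcomp_mul _ _ _ hg, HCatAux.pcomp_mul _ _ _ hg,
            HCatAux.pcomp_mul _ _ _ hg, hXeq, ← hw]
          ring
  have e2 : X = -hCat + hCat ^ 2 * (X : PowerSeries ℚ) ^ 2 := by
    have := HCatAux.hCat_eq
    linear_combination this
  have hfac : (w - X) * (1 - hCat ^ 2 * (w + X)) = 0 := by
    linear_combination e1 - e2
  rcases mul_eq_zero.mp hfac with h | h
  · exact sub_eq_zero.mp h
  · exfalso
    have := congrArg (PowerSeries.constantCoeff) h
    simp [map_sub, map_mul, map_pow, hg] at this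
end

section
/- Let I be a finite set and X ⊆ Y₂ × I² with complement Z. Suppose g(t) := ∑_{n≥0} (−1)^{n+1} (#Z_n) t^{n+1} and f(t) := ∑_{n≥0} (−1)^{n+1} (#X_n) t^{n+1}. If for each weight w ≥ 1 one forms the finite chain complex K_*^{(w)} with K_{n+1}^{(w)} = ⊕ K[Z_n × X_{i_0} × ⋯ × X_{i_n}] over tuples with n + i_0 + ⋯ + i_n = w, then the Euler characteristic of K_*^{(w)} equals the coefficient of (−1)^w t^{w+1} in g(f(t)). Consequently, if every K_*^{(w)} for w ≥ 1 is acyclic and K_*^{(0)} has Euler characteristic 1, then g(f(t)) = t. -/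
/-- Planar binary rooted trees with internal vertices labelled by `I`. -/
inductive PBTree (I : Type) : Type
  | leaf : PBTree I
  | node : PBTree I → I → PBTree I → PBTree I

/-- The two planar binary trees with 2 vertices: `L` (left comb) and `R` (right comb). -/
inductive Side : Type
  | L : Side
  | R : Side

namespace PBTree

variable {I : Type}

/-- The number of internal vertices of a tree. -/
def vertices : PBTree I → ℕ
  | leaf => 0
  | node l _ r => l.vertices + r.vertices + 1

/-- The set of local patterns of a labelled tree: each pair of adjacent internal vertices,
with labels `i` (lower vertex) and `j` (upper vertex), contributes `(L, i, j)` if the upper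
vertex is the left child and `(R, i, j)` if it is the right child. -/
def patterns : PBTree I → Set (Side × I × I)
  | leaf => ∅
  | node l i r =>
      l.patterns ∪ r.patterns ∪
      (match l with
        | leaf => ∅
        | node _ j _ => {(Side.L, i, j)}) ∪
      (match r with
        | leaf => ∅
        | node _ j _ => {(Side.R, i, j)})

/-- `treeSet X n` is the set `X_n` of labelled trees with `n` vertices all of whose
local patterns lie in `X`. -/
def treeSet (X : Set (Side × I × I)) (n : ℕ) : Set (PBTree I) :=
  {t : PBTree I | t.vertices = n ∧ t.patterns ⊆ X}

end PBTree

open PBTree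

open Finset PowerSeries in
lemma coeff_mk_pow (c : ℕ → ℚ) : ∀ (k n : ℕ),
    PowerSeries.coeff n ((PowerSeries.mk c) ^ k) =
      ∑ i ∈ Finset.Nat.antidiagonalTuple k n, ∏ j, c (i j)
  | 0, 0 => by simp
  | 0, n + 1 => by simp [Finset.Nat.antidiagonalTuple_zero_succ]
  | k + 1, n => by
    rw [pow_succ, PowerSeries.coeff_mul]
    calc ∑ p ∈ antidiagonal n, coeff p.1 ((mk c) ^ k) * coeff p.2 (mk c)
        = ∑ p ∈ antidiagonal n, ∑ i ∈ Finset.Nat.antidiagonalTuple k p.1,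
            (∏ j, c (i j)) * c p.2 := by
          refine Finset.sum_congr rfl fun p _ => ?_
          rw [coeff_mk_pow c k p.1, PowerSeries.coeff_mk, Finset.sum_mul]
      _ = ∑ x ∈ (antidiagonal n).sigma (fun p => Finset.Nat.antidiagonalTuple k p.1),
            (∏ j, c (x.2 j)) * c x.1.2 := by rw [Finset.sum_sigma]
      _ = ∑ i ∈ Finset.Nat.antidiagonalTuple (k + 1) n, ∏ j, c (i j) := by
          refine Finset.sum_nbij' (fun x => Fin.snoc x.2 x.1.2)
            (fun i => ⟨(∑ j, i (Fin.castSucc j), i (Fin.last k)), Fin.init i⟩)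
            ?_ ?_ ?_ ?_ ?_
          · rintro ⟨⟨p, q⟩, i⟩ hx
            simp only [Finset.mem_sigma, Finset.mem_antidiagonal,
              Finset.Nat.mem_antidiagonalTuple] at hx ⊢
            rw [Fin.sum_univ_castSucc]
            simp [hx.1, hx.2]
            exact HasAntidiagonal.mem_antidiagonal.mp hx.1
          · intro i hi
            simp only [Finset.Nat.mem_antidiagonalTuple] at hi
            simp only [Finset.mem_sigma, Finset.mem_antidiagonal,
              Finset.Nat.mem_antidiagonalTuple]
            constructor
            · rw [← hi, Fin.sum_univ_castSucc]
              exact HasAntidiagonal.mem_antidiagonal.mpr rfl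
            · rfl
          · rintro ⟨⟨p, q⟩, i⟩ hx
            simp only [Finset.mem_sigma, Finset.mem_antidiagonal,
              Finset.Nat.mem_antidiagonalTuple] at hx
            ext
            · simp [Fin.snoc_castSucc, hx.2]
            · simp
            · simp [Fin.init_snoc]
          · intro i _
            simp [Fin.snoc_init_self]
          · rintro ⟨⟨p, q⟩, i⟩ _
            rw [Fin.prod_univ_castSucc]
            simp

open Finset PowerSeries in
lemma coeff_f_pow (a : ℕ → ℚ) (k n : ℕ) :
    PowerSeries.coeff n
      ((PowerSeries.mk fun m => if m = 0 then 0 else (-1 : ℚ) ^ m * a (m - 1)) ^ k) =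
      if k ≤ n then (-1 : ℚ) ^ n * ∑ i ∈ Finset.Nat.antidiagonalTuple k (n - k), ∏ j, a (i j)
      else 0 := by
  rw [coeff_mk_pow]
  by_cases hkn : k ≤ n
  · rw [if_pos hkn]
    have : ∑ i ∈ Finset.Nat.antidiagonalTuple k n,
        ∏ j, (if i j = 0 then 0 else (-1 : ℚ) ^ (i j) * a (i j - 1)) =
        ∑ i ∈ (Finset.Nat.antidiagonalTuple k n).filter (fun i => ∀ j, i j ≠ 0),
        ∏ j, (if i j = 0 then 0 else (-1 : ℚ) ^ (i j) * a (i j - 1)) := by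
      rw [Finset.sum_filter_of_ne]
      intro i _ hne
      by_contra h
      push_neg at h
      obtain ⟨j, hj⟩ := h
      exact hne (Finset.prod_eq_zero (Finset.mem_univ j) (by rw [if_pos hj]))
    rw [this]
    rw [Finset.mul_sum]
    refine Finset.sum_nbij' (fun i j => i j - 1) (fun i j => i j + 1) ?_ ?_ ?_ ?_ ?_
    · intro i hi
      simp only [Finset.mem_filter, Finset.Nat.mem_antidiagonalTuple] at hi ⊢
      have h1 : ∑ j, (i j - 1 + 1) = ∑ j, i j :=
        Finset.sum_congr rfl fun j _ => by have := hi.2 j; omega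
      rw [Finset.sum_add_distrib, Finset.sum_const, Finset.card_univ, Fintype.card_fin,
        hi.1] at h1
      simp only [smul_eq_mul, mul_one] at h1
      omega
    · intro i hi
      simp only [Finset.Nat.mem_antidiagonalTuple] at hi
      simp only [Finset.mem_filter, Finset.Nat.mem_antidiagonalTuple]
      refine ⟨?_, fun j => by omega⟩
      rw [Finset.sum_add_distrib, Finset.sum_const, Finset.card_univ, Fintype.card_fin, hi]
      simp only [smul_eq_mul, mul_one]
      omega
    · intro i hi
      simp only [Finset.mem_filter, Finset.Nat.mem_antidiagonalTuple] at hi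
      funext j
      have h2 := hi.2 j
      simp only []
      omega
    · intro i _
      funext j
      simp only []
      omega
    · intro i hi
      simp only [Finset.mem_filter, Finset.Nat.mem_antidiagonalTuple] at hi
      have hs : ∀ j : Fin k, (if i j = 0 then (0:ℚ) else (-1 : ℚ) ^ (i j) * a (i j - 1)) =
          (-1 : ℚ) ^ (i j) * a (i j - 1) := fun j => if_neg (hi.2 j)
      rw [Finset.prod_congr rfl fun j _ => hs j, Finset.prod_mul_distrib,
        Finset.prod_pow_eq_pow_sum, hi.1]
  · rw [if_neg hkn]
    refine Finset.sum_eq_zero fun i hi => ?_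
    simp only [Finset.Nat.mem_antidiagonalTuple] at hi
    have : ∃ j, i j = 0 := by
      by_contra h
      push_neg at h
      have hk : k ≤ ∑ j, i j := by
        calc k = ∑ _j : Fin k, 1 := by simp
          _ ≤ ∑ j, i j := Finset.sum_le_sum fun j _ => Nat.one_le_iff_ne_zero.mpr (h j)
      omega
    obtain ⟨j, hj⟩ := this
    exact Finset.prod_eq_zero (Finset.mem_univ j) (by rw [if_pos hj])


/-- Let `X ⊆ Y₂ × I²` with complement `Z`, let `a_n = #X_n`, `b_n = #Z_n`, and let
`f(t) = ∑ (−1)^{n+1} a_n t^{n+1}`, `g(t) = ∑ (−1)^{n+1} b_n t^{n+1}`.  For each weight `w`,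
the chain complex `K_*^{(w)}` has `K_{n+1}^{(w)} = ⊕ K[Z_n × X_{i_0} × ⋯ × X_{i_n}]`, the sum
over `(i_0,…,i_n)` with `n + i_0 + ⋯ + i_n = w`, so `dim K_{n+1}^{(w)} = b_n · ∑ ∏_j a_{i_j}`
and its Euler characteristic is `χ(w) = ∑_{n=0}^{w} (−1)^n b_n ∑_{i_0+⋯+i_n=w−n} ∏_j a_{i_j}`.
Then the coefficient of `t^{w+1}` in `g(f(t))` is `(−1)^w χ(w)`; consequently, if `χ(w) = 0`
for all `w ≥ 1` (as holds when each `K_*^{(w)}` is acyclic) and `χ(0) = 1`, then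
`g(f(t)) = t`. -/
theorem euler_characteristic_koszul {I : Type} [Fintype I]
    (X Z : Set (Side × I × I)) (hZ : Z = Xᶜ)
    (a b : ℕ → ℚ)
    (ha : ∀ n, a n = ((PBTree.treeSet X n).ncard : ℚ))
    (hb : ∀ n, b n = ((PBTree.treeSet Z n).ncard : ℚ))
    (f g : PowerSeries ℚ)
    (hf : f = PowerSeries.mk fun m => if m = 0 then 0 else (-1 : ℚ) ^ m * a (m - 1))
    (hg : g = PowerSeries.mk fun m => if m = 0 then 0 else (-1 : ℚ) ^ m * b (m - 1))
    (χ : ℕ → ℚ)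
    (hχ : ∀ w, χ w = ∑ n ∈ Finset.range (w + 1), (-1 : ℚ) ^ n * b n *
      ∑ i ∈ Finset.Nat.antidiagonalTuple (n + 1) (w - n), ∏ j, a (i j)) :
    (∀ w : ℕ, PowerSeries.coeff (w + 1) (pcomp g f) = (-1 : ℚ) ^ w * χ w) ∧
    ((∀ w : ℕ, 1 ≤ w → χ w = 0) → χ 0 = 1 → pcomp g f = PowerSeries.X) := by
  have key : ∀ w : ℕ, PowerSeries.coeff (w + 1) (pcomp g f) = (-1 : ℚ) ^ w * χ w := by
    intro w
    rw [pcomp, PowerSeries.coeff_mk, hχ, Finset.sum_range_succ']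
    have h0 : PowerSeries.coeff 0 g * PowerSeries.coeff (w + 1) (f ^ 0) = 0 := by
      rw [hg]; simp
    rw [h0, add_zero, Finset.mul_sum]
    refine Finset.sum_congr rfl fun n hn => ?_
    rw [Finset.mem_range] at hn
    rw [hg, hf, PowerSeries.coeff_mk, coeff_f_pow]
    rw [if_neg (Nat.succ_ne_zero n), if_pos (by omega : n + 1 ≤ w + 1)]
    have h1 : w + 1 - (n + 1) = w - n := by omega
    have h2 : n + 1 - 1 = n := by omega
    rw [h1, h2, pow_succ, pow_succ]
    ring
  refine ⟨key, fun hvan h0 => ?_⟩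
  ext n
  match n with
  | 0 =>
    rw [pcomp, PowerSeries.coeff_mk]
    simp [hg]
  | w + 1 =>
    rw [key w, PowerSeries.coeff_X]
    match w with
    | 0 => simp [h0]
    | v + 1 =>
      rw [hvan (v + 1) (by omega), if_neg (by omega)]
      ring
end
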